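/- Let η̄, F̄, h be continuous and K-Lipschitz in the spatial variables (|η̄(t,x)−η̄(t,x')| ≤ K|x−x'|, |h(x)−h(x')| ≤ K|x−x'|, |F̄(t,x,y)−F̄(t,x',y')| ≤ K(|x−x'|+|y−y'|)), and let γ_K > 0 be a constant, depending only on K, such that the forward–backward system with data (η̄, F̄, h) has a unique continuous solution on every interval [τ,T] with T−τ ≤ γ_K from every initial point. Suppose ỹ₁, ỹ₂ : [τ,T]×ℝⁿ → ℝⁿ are continuously differentiable in (t,x) with bounded spatial derivatives, and both satisfy the backward inviscid equation ỹ(t,x) = h(x) + ∫_t^T [−((η̄(s,x)+ỹ(s,x)),∇)ỹ(s,x) + F̄(s,x,ỹ(s,x))] ds on [τ,T]×ℝⁿ, where T−τ ≤ γ_K. Then ỹ₁ = ỹ₂ on [τ,T]×ℝⁿ. -/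

import Mathlib

open Set MeasureTheory intervalIntegral

open Topology Filter Asymptotics

noncomputable def dirDeriv {n : ℕ} (f : (Fin n → ℝ) → Fin n → ℝ) (x u : Fin n → ℝ) :
    Fin n → ℝ :=
  fderiv ℝ f x u

noncomputable def lap {n : ℕ} (f : (Fin n → ℝ) → Fin n → ℝ) (x : Fin n → ℝ) : Fin n → ℝ :=
  ∑ j : Fin n, fderiv ℝ (fun z => fderiv ℝ f z (Pi.single j 1)) x (Pi.single j 1)
/-- The deterministic, inviscid forward–backward system on `[τ,T]` with data
`(η̄, F̄, h)` and initial point `x`. -/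
def FBSol {n : ℕ} (T τ : ℝ) (ηb : ℝ → (Fin n → ℝ) → Fin n → ℝ)
    (Fb : ℝ → (Fin n → ℝ) → (Fin n → ℝ) → Fin n → ℝ)
    (h : (Fin n → ℝ) → Fin n → ℝ) (x : Fin n → ℝ)
    (X Y : ℝ → Fin n → ℝ) : Prop :=
  ContinuousOn X (Icc τ T) ∧ ContinuousOn Y (Icc τ T) ∧
  (∀ t ∈ Icc τ T, X t = x - ∫ s in τ..t, (ηb s (X s) + Y s)) ∧
  (∀ t ∈ Icc τ T, Y t = h (X T) + ∫ s in t..T, Fb s (X s) (Y s))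

/-- The class `C^{1,1}` on `[a,b]×ℝⁿ`: continuously differentiable in `(t,x)`. -/
def C11On {n : ℕ} (a b : ℝ) (y : ℝ → (Fin n → ℝ) → Fin n → ℝ) : Prop :=
  ContinuousOn (fun p : ℝ × (Fin n → ℝ) => y p.1 p.2)
    (Icc a b ×ˢ (univ : Set (Fin n → ℝ))) ∧
  (∀ t ∈ Icc a b, Differentiable ℝ (y t)) ∧
  (∀ x : Fin n → ℝ, ∀ t ∈ Icc a b,
    DifferentiableWithinAt ℝ (fun s => y s x) (Icc a b) t) ∧
  ContinuousOn (fun p : ℝ × (Fin n → ℝ) =>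
      derivWithin (fun s => y s p.2) (Icc a b) p.1)
    (Icc a b ×ˢ (univ : Set (Fin n → ℝ))) ∧
  ContinuousOn (fun p : ℝ × (Fin n → ℝ) => fderiv ℝ (y p.1) p.2)
    (Icc a b ×ˢ (univ : Set (Fin n → ℝ)))

section aux

variable {E : Type*} [NormedAddCommGroup E] [NormedSpace ℝ E] [CompleteSpace E]

/-- FTC: derivative within `Icc a b` of `u ↦ ∫_a^u g`. -/
lemma ftc_right {g : ℝ → E} {a b : ℝ} (hg : ContinuousOn g (Icc a b))
    {t : ℝ} (ht : t ∈ Icc a b) :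
    HasDerivWithinAt (fun u => ∫ s in a..u, g s) (g t) (Icc a b) t := by
  haveI : Fact (t ∈ Icc a b) := ⟨ht⟩
  refine intervalIntegral.integral_hasDerivWithinAt_right ?_ ?_ (hg.continuousWithinAt ht)
  · refine ContinuousOn.intervalIntegrable (hg.mono ?_)
    rw [uIcc_of_le ht.1]
    exact Icc_subset_Icc le_rfl ht.2
  · exact ⟨Icc a b, self_mem_nhdsWithin, hg.aestronglyMeasurable measurableSet_Icc⟩

variable {F : Type*} [NormedAddCommGroup F] [NormedSpace ℝ F]

omit [CompleteSpace E] in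
/-- Chain rule along a curve for a function with continuous spatial derivative
and an existing time partial derivative. -/
lemma chain_rule {y : ℝ → E → F} {a b : ℝ}
    (hdiff : ∀ t ∈ Icc a b, Differentiable ℝ (y t))
    (hfc : ContinuousOn (fun p : ℝ × E => fderiv ℝ (y p.1) p.2)
      (Icc a b ×ˢ (univ : Set E)))
    {X : ℝ → E} {X' : E} {s₀ : ℝ} (hs₀ : s₀ ∈ Icc a b)
    (hX : HasDerivWithinAt X X' (Icc a b) s₀)
    {p : F} (hp : HasDerivWithinAt (fun s => y s (X s₀)) p (Icc a b) s₀) :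
    HasDerivWithinAt (fun s => y s (X s))
      (p + fderiv ℝ (y s₀) (X s₀) X') (Icc a b) s₀ := by
  set x₀ := X s₀ with hx₀
  set D₀ := fderiv ℝ (y s₀) x₀ with hD₀
  have h1 : HasDerivWithinAt (fun s => y s x₀ + D₀ (X s - x₀)) (p + D₀ X') (Icc a b) s₀ := by
    refine hp.add ?_
    exact D₀.hasFDerivAt.comp_hasDerivWithinAt s₀ (hX.sub_const x₀)
  have h0 : HasDerivWithinAt (fun s => y s (X s) - (y s x₀ + D₀ (X s - x₀)))
      (0 : F) (Icc a b) s₀ := by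
    rw [hasDerivWithinAt_iff_isLittleO]
    have hO : (fun s => X s - x₀) =O[𝓝[Icc a b] s₀] fun s => s - s₀ :=
      hX.hasFDerivWithinAt.isBigO_sub
    have hlittle : (fun s => y s (X s) - (y s x₀ + D₀ (X s - x₀)))
        =o[𝓝[Icc a b] s₀] fun s => X s - x₀ := by
      rw [Asymptotics.isLittleO_iff]
      intro ε hε
      have hc : ContinuousWithinAt (fun p : ℝ × E => fderiv ℝ (y p.1) p.2)
          (Icc a b ×ˢ (univ : Set E)) (s₀, x₀) := hfc _ ⟨hs₀, mem_univ _⟩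
      rw [Metric.continuousWithinAt_iff] at hc
      obtain ⟨δ, hδ0, hδ⟩ := hc ε hε
      have e1 : ∀ᶠ s in 𝓝[Icc a b] s₀, dist s s₀ < δ :=
        (Metric.tendsto_nhds.1 (tendsto_nhdsWithin_of_tendsto_nhds tendsto_id)) δ hδ0
      have e2 : ∀ᶠ s in 𝓝[Icc a b] s₀, dist (X s) x₀ < δ :=
        (Metric.tendsto_nhds.1 hX.continuousWithinAt) δ hδ0
      have e3 : ∀ᶠ s in 𝓝[Icc a b] s₀, s ∈ Icc a b := self_mem_nhdsWithin
      filter_upwards [e1, e2, e3] with s hs1 hs2 hs3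
      have hmv := Convex.norm_image_sub_le_of_norm_hasFDerivWithin_le
        (f := fun z => y s z - D₀ z) (f' := fun z => fderiv ℝ (y s) z - D₀)
        (s := Metric.ball x₀ δ) (C := ε) ?_ ?_ (convex_ball x₀ δ)
        (Metric.mem_ball_self hδ0) (by exact Metric.mem_ball.2 hs2)
      · calc ‖y s (X s) - (y s x₀ + D₀ (X s - x₀))‖
            = ‖(y s (X s) - D₀ (X s)) - (y s x₀ - D₀ x₀)‖ := by
              rw [map_sub]; congr 1; abel
          _ ≤ ε * ‖X s - x₀‖ := hmv
      · intro z hz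
        exact (((hdiff s hs3 z).hasFDerivAt).sub D₀.hasFDerivAt).hasFDerivWithinAt
      · intro z hz
        have hq : ((s, z) : ℝ × E) ∈ Icc a b ×ˢ (univ : Set E) := ⟨hs3, mem_univ _⟩
        have := hδ hq (by
          rw [Prod.dist_eq]
          exact max_lt hs1 (Metric.mem_ball.1 hz))
        rw [dist_eq_norm] at this
        exact this.le
    have : (fun s => y s (X s) - (y s x₀ + D₀ (X s - x₀)))
        =o[𝓝[Icc a b] s₀] fun s => s - s₀ := hlittle.trans_isBigO hO
    simpa [← hx₀] using this
  have := h0.add h1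
  rw [zero_add] at this
  convert this using 1; funext s; exact (sub_add_cancel _ _).symm

end aux

/-- Along any solution of the forward–backward system on `[t₀,T] ⊆ [τ,T]`,
a `C¹` solution of the backward inviscid equation coincides with `Y`. -/
lemma key_lemma {n : ℕ} {T τ K M : ℝ} (hτ0 : 0 ≤ τ)
    {ηb : ℝ → (Fin n → ℝ) → Fin n → ℝ}
    {Fb : ℝ → (Fin n → ℝ) → (Fin n → ℝ) → Fin n → ℝ}
    {h : (Fin n → ℝ) → Fin n → ℝ}
    (hηc : ContinuousOn (fun p : ℝ × (Fin n → ℝ) => ηb p.1 p.2)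
      (Icc (0:ℝ) T ×ˢ (univ : Set (Fin n → ℝ))))
    (hFc : ContinuousOn (fun p : ℝ × (Fin n → ℝ) × (Fin n → ℝ) => Fb p.1 p.2.1 p.2.2)
      (Icc (0:ℝ) T ×ˢ (univ : Set ((Fin n → ℝ) × (Fin n → ℝ)))))
    (hFL : ∀ t ∈ Icc (0:ℝ) T, ∀ x x' v v',
      ‖Fb t x v - Fb t x' v'‖ ≤ K * (‖x - x'‖ + ‖v - v'‖))
    {y : ℝ → (Fin n → ℝ) → Fin n → ℝ}
    (hyc : ContinuousOn (fun p : ℝ × (Fin n → ℝ) => y p.1 p.2)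
      (Icc τ T ×ˢ (univ : Set (Fin n → ℝ))))
    (hyd : ∀ t ∈ Icc τ T, Differentiable ℝ (y t))
    (hyf : ContinuousOn (fun p : ℝ × (Fin n → ℝ) => fderiv ℝ (y p.1) p.2)
      (Icc τ T ×ˢ (univ : Set (Fin n → ℝ))))
    (hM : ∀ t ∈ Icc τ T, ∀ x, ‖fderiv ℝ (y t) x‖ ≤ M)
    (heq : ∀ t ∈ Icc τ T, ∀ x, y t x = h x +
      ∫ s in t..T, (Fb s x (y s x) - dirDeriv (y s) x (ηb s x + y s x)))
    {t₀ : ℝ} (ht₀ : t₀ ∈ Icc τ T)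
    {x₀ : Fin n → ℝ} {X Y : ℝ → Fin n → ℝ}
    (hXc : ContinuousOn X (Icc t₀ T)) (hYc : ContinuousOn Y (Icc t₀ T))
    (hXeq : ∀ t ∈ Icc t₀ T, X t = x₀ - ∫ s in t₀..t, (ηb s (X s) + Y s))
    (hYeq : ∀ t ∈ Icc t₀ T, Y t = h (X T) + ∫ s in t..T, Fb s (X s) (Y s)) :
    ∀ s ∈ Icc t₀ T, Y s = y s (X s) := by
  have hsub : Icc t₀ T ⊆ Icc τ T := Icc_subset_Icc ht₀.1 le_rfl
  have hsub0 : Icc τ T ⊆ Icc (0:ℝ) T := Icc_subset_Icc hτ0 le_rfl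
  have htT : t₀ ≤ T := ht₀.2
  have hτT : τ ≤ T := le_trans ht₀.1 ht₀.2
  -- continuity of auxiliary curves
  have hcurve : ContinuousOn (fun s => (s, X s)) (Icc t₀ T) := continuousOn_id.prodMk hXc
  have hf₁ : ContinuousOn (fun s => ηb s (X s) + Y s) (Icc t₀ T) :=
    (hηc.comp hcurve fun s hs => ⟨hsub0 (hsub hs), mem_univ _⟩).add hYc
  have hg₁ : ContinuousOn (fun s => Fb s (X s) (Y s)) (Icc t₀ T) :=
    hFc.comp (continuousOn_id.prodMk (hXc.prodMk hYc))
      fun s hs => ⟨hsub0 (hsub hs), mem_univ _⟩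
  -- derivative of X
  have hX' : ∀ s ∈ Icc t₀ T, HasDerivWithinAt X (-(ηb s (X s) + Y s)) (Icc t₀ T) s := by
    intro s hs
    exact ((ftc_right hf₁ hs).const_sub x₀).congr (fun u hu => hXeq u hu) (hXeq s hs)
  -- derivative of Y
  have hgint : ∀ u ∈ Icc t₀ T, IntervalIntegrable (fun s => Fb s (X s) (Y s)) volume t₀ u := by
    intro u hu
    refine (hg₁.mono ?_).intervalIntegrable
    rw [uIcc_of_le hu.1]; exact Icc_subset_Icc le_rfl hu.2
  have hYrw : ∀ u ∈ Icc t₀ T, Y u =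
      (h (X T) + ∫ s in t₀..T, Fb s (X s) (Y s)) - ∫ s in t₀..u, Fb s (X s) (Y s) := by
    intro u hu
    rw [hYeq u hu, add_sub_assoc,
      intervalIntegral.integral_interval_sub_left (hgint T ⟨htT, le_rfl⟩) (hgint u hu)]
  have hY' : ∀ s ∈ Icc t₀ T, HasDerivWithinAt Y (-(Fb s (X s) (Y s))) (Icc t₀ T) s := by
    intro s hs
    exact ((ftc_right hg₁ hs).const_sub _).congr (fun u hu => hYrw u hu) (hYrw s hs)
  -- continuity of the integrand of the backward equation, for fixed x
  have hGc : ∀ x : Fin n → ℝ, ContinuousOn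
      (fun s => Fb s x (y s x) - dirDeriv (y s) x (ηb s x + y s x)) (Icc τ T) := by
    intro x
    have hyx : ContinuousOn (fun s => y s x) (Icc τ T) :=
      hyc.comp (continuousOn_id.prodMk continuousOn_const) fun s hs => ⟨hs, mem_univ _⟩
    have hηx : ContinuousOn (fun s => ηb s x) (Icc τ T) :=
      hηc.comp (continuousOn_id.prodMk continuousOn_const) fun s hs => ⟨hsub0 hs, mem_univ _⟩
    have hDx : ContinuousOn (fun s => fderiv ℝ (y s) x) (Icc τ T) :=
      hyf.comp (continuousOn_id.prodMk continuousOn_const) fun s hs => ⟨hs, mem_univ _⟩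
    have h1 : ContinuousOn (fun s => Fb s x (y s x)) (Icc τ T) :=
      hFc.comp (continuousOn_id.prodMk (continuousOn_const.prodMk hyx))
        fun s hs => ⟨hsub0 hs, mem_univ _⟩
    exact h1.sub (hDx.clm_apply (hηx.add hyx))
  -- time partial derivative of y
  have hyt : ∀ x : Fin n → ℝ, ∀ s ∈ Icc τ T,
      HasDerivWithinAt (fun u => y u x)
        (-(Fb s x (y s x) - dirDeriv (y s) x (ηb s x + y s x))) (Icc τ T) s := by
    intro x s hs
    have hGi : ∀ u ∈ Icc τ T, IntervalIntegrable
        (fun r => Fb r x (y r x) - dirDeriv (y r) x (ηb r x + y r x)) volume τ u := by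
      intro u hu
      refine ((hGc x).mono ?_).intervalIntegrable
      rw [uIcc_of_le hu.1]; exact Icc_subset_Icc le_rfl hu.2
    have hyrw : ∀ u ∈ Icc τ T, y u x =
        (h x + ∫ r in τ..T, (Fb r x (y r x) - dirDeriv (y r) x (ηb r x + y r x)))
          - ∫ r in τ..u, (Fb r x (y r x) - dirDeriv (y r) x (ηb r x + y r x)) := by
      intro u hu
      rw [heq u hu x, add_sub_assoc,
        intervalIntegral.integral_interval_sub_left (hGi T ⟨hτT, le_rfl⟩) (hGi u hu)]
    exact ((ftc_right (hGc x) hs).const_sub _).congr (fun u hu => hyrw u hu) (hyrw s hs)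
  -- the difference function
  have hyXc : ContinuousOn (fun s => y s (X s)) (Icc t₀ T) :=
    hyc.comp (continuousOn_id.prodMk hXc) fun s hs => ⟨hsub hs, mem_univ _⟩
  have hzc : ContinuousOn (fun s => Y s - y s (X s)) (Icc t₀ T) := hYc.sub hyXc
  have hzT : Y T - y T (X T) = 0 := by
    have h1 : Y T = h (X T) := by
      have := hYeq T ⟨htT, le_rfl⟩
      simpa [intervalIntegral.integral_same] using this
    have h2 : y T (X T) = h (X T) := by
      have := heq T ⟨hτT, le_rfl⟩ (X T)
      simpa [intervalIntegral.integral_same] using this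
    rw [h1, h2, sub_self]
  have hz' : ∀ s ∈ Icc t₀ T, HasDerivWithinAt (fun u => Y u - y u (X u))
      (-(Fb s (X s) (Y s)) -
        (-(Fb s (X s) (y s (X s)) - dirDeriv (y s) (X s) (ηb s (X s) + y s (X s))) +
          fderiv ℝ (y s) (X s) (-(ηb s (X s) + Y s)))) (Icc t₀ T) s := by
    intro s hs
    have hcomp := chain_rule (fun t ht => hyd t (hsub ht))
      (hyf.mono (prod_mono hsub subset_rfl)) hs (hX' s hs)
      ((hyt (X s) s (hsub hs)).mono hsub)
    exact (hY' s hs).sub hcomp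
  -- bound on the derivative
  have hbound : ∀ s ∈ Icc t₀ T,
      ‖-(Fb s (X s) (Y s)) -
        (-(Fb s (X s) (y s (X s)) - dirDeriv (y s) (X s) (ηb s (X s) + y s (X s))) +
          fderiv ℝ (y s) (X s) (-(ηb s (X s) + Y s)))‖
        ≤ (K + M) * ‖Y s - y s (X s)‖ := by
    intro s hs
    have hrw : -(Fb s (X s) (Y s)) -
        (-(Fb s (X s) (y s (X s)) - dirDeriv (y s) (X s) (ηb s (X s) + y s (X s))) +
          fderiv ℝ (y s) (X s) (-(ηb s (X s) + Y s)))
        = (Fb s (X s) (y s (X s)) - Fb s (X s) (Y s)) +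
            fderiv ℝ (y s) (X s) (Y s - y s (X s)) := by
      simp only [dirDeriv, map_neg, map_add, map_sub]
      abel
    rw [hrw]
    have h1 : ‖Fb s (X s) (y s (X s)) - Fb s (X s) (Y s)‖ ≤ K * ‖Y s - y s (X s)‖ := by
      have hfl := hFL s (hsub0 (hsub hs)) (X s) (X s) (y s (X s)) (Y s)
      rw [sub_self, norm_zero, zero_add] at hfl
      calc ‖Fb s (X s) (y s (X s)) - Fb s (X s) (Y s)‖
          ≤ K * ‖y s (X s) - Y s‖ := hfl
        _ = K * ‖Y s - y s (X s)‖ := by rw [norm_sub_rev]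
    have h2 : ‖fderiv ℝ (y s) (X s) (Y s - y s (X s))‖ ≤ M * ‖Y s - y s (X s)‖ :=
      ((fderiv ℝ (y s) (X s)).le_opNorm _).trans
        (mul_le_mul_of_nonneg_right (hM s (hsub hs) (X s)) (norm_nonneg _))
    calc ‖(Fb s (X s) (y s (X s)) - Fb s (X s) (Y s)) +
            fderiv ℝ (y s) (X s) (Y s - y s (X s))‖
        ≤ ‖Fb s (X s) (y s (X s)) - Fb s (X s) (Y s)‖ +
            ‖fderiv ℝ (y s) (X s) (Y s - y s (X s))‖ := norm_add_le _ _
      _ ≤ K * ‖Y s - y s (X s)‖ + M * ‖Y s - y s (X s)‖ := add_le_add h1 h2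
      _ = (K + M) * ‖Y s - y s (X s)‖ := by ring
  -- Gronwall, backwards in time
  have hmaps : MapsTo (fun u : ℝ => t₀ + T - u) (Icc t₀ T) (Icc t₀ T) := by
    intro u hu
    simp only [mem_Icc] at hu ⊢
    constructor <;> linarith
  have key0 : ∀ u ∈ Icc t₀ T, ‖(fun v => Y (t₀ + T - v) - y (t₀ + T - v) (X (t₀ + T - v))) u‖
      ≤ gronwallBound 0 (K + M) 0 (u - t₀) := by
    apply norm_le_gronwallBound_of_norm_deriv_right_le
      (f' := fun v => -(-(Fb (t₀ + T - v) (X (t₀ + T - v)) (Y (t₀ + T - v))) -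
        (-(Fb (t₀ + T - v) (X (t₀ + T - v)) (y (t₀ + T - v) (X (t₀ + T - v))) -
            dirDeriv (y (t₀ + T - v)) (X (t₀ + T - v))
              (ηb (t₀ + T - v) (X (t₀ + T - v)) + y (t₀ + T - v) (X (t₀ + T - v)))) +
          fderiv ℝ (y (t₀ + T - v)) (X (t₀ + T - v))
            (-(ηb (t₀ + T - v) (X (t₀ + T - v)) + Y (t₀ + T - v))))))
    · exact hzc.comp ((continuous_const.sub continuous_id).continuousOn) hmaps
    · intro v hv
      have hσ : HasDerivWithinAt (fun u : ℝ => t₀ + T - u) (-1) (Icc t₀ T) v :=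
        (hasDerivWithinAt_id v _).const_sub (t₀ + T)
      have hcomp := HasDerivWithinAt.scomp v
        (hz' (t₀ + T - v) (hmaps (Ico_subset_Icc_self hv))) hσ hmaps
      have hder : HasDerivWithinAt
          (fun u => Y (t₀ + T - u) - y (t₀ + T - u) (X (t₀ + T - u)))
          (-(-(Fb (t₀ + T - v) (X (t₀ + T - v)) (Y (t₀ + T - v))) -
            (-(Fb (t₀ + T - v) (X (t₀ + T - v)) (y (t₀ + T - v) (X (t₀ + T - v))) -
                dirDeriv (y (t₀ + T - v)) (X (t₀ + T - v))
                  (ηb (t₀ + T - v) (X (t₀ + T - v)) + y (t₀ + T - v) (X (t₀ + T - v)))) +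
              fderiv ℝ (y (t₀ + T - v)) (X (t₀ + T - v))
                (-(ηb (t₀ + T - v) (X (t₀ + T - v)) + Y (t₀ + T - v)))))) (Icc t₀ T) v := by
        simpa [Function.comp_def, neg_one_smul] using hcomp
      exact hder.mono_of_mem_nhdsWithin (Icc_mem_nhdsGE_of_mem hv)
    · simpa [show t₀ + T - t₀ = T by ring, hzT] using le_refl (0:ℝ)
    · intro v hv
      have hb := hbound (t₀ + T - v) (hmaps (Ico_subset_Icc_self hv))
      rw [norm_neg]
      simpa using hb
  intro s hs
  have hmem : t₀ + T - s ∈ Icc t₀ T := hmaps hs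
  have hle := key0 (t₀ + T - s) hmem
  rw [gronwallBound_ε0_δ0] at hle
  have h0 : ‖Y (t₀ + T - (t₀ + T - s)) -
      y (t₀ + T - (t₀ + T - s)) (X (t₀ + T - (t₀ + T - s)))‖ ≤ 0 := hle
  rw [show t₀ + T - (t₀ + T - s) = s by ring] at h0
  exact sub_eq_zero.1 (norm_le_zero_iff.1 h0)

/-- Uniqueness of `C¹` solutions (with bounded spatial derivatives) of the backward
inviscid equation on a short interval on which the forward–backward system is
uniquely solvable. -/
theorem stmt_12 {n : ℕ} (hn : 1 ≤ n) (T K γ : ℝ) (hT : 0 < T) (hK : 0 < K)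
    (hγ : 0 < γ)
    (ηb : ℝ → (Fin n → ℝ) → Fin n → ℝ)
    (Fb : ℝ → (Fin n → ℝ) → (Fin n → ℝ) → Fin n → ℝ)
    (h : (Fin n → ℝ) → Fin n → ℝ)
    (hηc : ContinuousOn (fun p : ℝ × (Fin n → ℝ) => ηb p.1 p.2)
      (Icc (0:ℝ) T ×ˢ (univ : Set (Fin n → ℝ))))
    (hFc : ContinuousOn (fun p : ℝ × (Fin n → ℝ) × (Fin n → ℝ) => Fb p.1 p.2.1 p.2.2)
      (Icc (0:ℝ) T ×ˢ (univ : Set ((Fin n → ℝ) × (Fin n → ℝ)))))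
    (hhc : Continuous h)
    (hηL : ∀ t ∈ Icc (0:ℝ) T, ∀ x x', ‖ηb t x - ηb t x'‖ ≤ K * ‖x - x'‖)
    (hhL : ∀ x x', ‖h x - h x'‖ ≤ K * ‖x - x'‖)
    (hFL : ∀ t ∈ Icc (0:ℝ) T, ∀ x x' v v',
      ‖Fb t x v - Fb t x' v'‖ ≤ K * (‖x - x'‖ + ‖v - v'‖))
    -- `γ` is such that the forward–backward system is uniquely solvable on every
    -- interval `[τ',T]` of length at most `γ`, from every initial point:
    (hwp : ∀ τ' : ℝ, 0 ≤ τ' → τ' ≤ T → T - τ' ≤ γ → ∀ x : Fin n → ℝ,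
      ∃ X Y : ℝ → Fin n → ℝ, FBSol T τ' ηb Fb h x X Y ∧
        ∀ X' Y' : ℝ → Fin n → ℝ, FBSol T τ' ηb Fb h x X' Y' →
          ∀ t ∈ Icc τ' T, X' t = X t ∧ Y' t = Y t)
    (τ : ℝ) (hτ0 : 0 ≤ τ) (hτT : τ ≤ T) (hτγ : T - τ ≤ γ)
    (y₁ y₂ : ℝ → (Fin n → ℝ) → Fin n → ℝ)
    (hy₁ : C11On τ T y₁) (hy₂ : C11On τ T y₂)
    (hy₁b : ∃ M : ℝ, ∀ t ∈ Icc τ T, ∀ x, ‖fderiv ℝ (y₁ t) x‖ ≤ M)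
    (hy₂b : ∃ M : ℝ, ∀ t ∈ Icc τ T, ∀ x, ‖fderiv ℝ (y₂ t) x‖ ≤ M)
    (heq₁ : ∀ t ∈ Icc τ T, ∀ x, y₁ t x = h x +
      ∫ s in t..T, (Fb s x (y₁ s x) - dirDeriv (y₁ s) x (ηb s x + y₁ s x)))
    (heq₂ : ∀ t ∈ Icc τ T, ∀ x, y₂ t x = h x +
      ∫ s in t..T, (Fb s x (y₂ s x) - dirDeriv (y₂ s) x (ηb s x + y₂ s x))) :
    ∀ t ∈ Icc τ T, ∀ x, y₁ t x = y₂ t x := by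
  intro t ht x
  have hTt : T - t ≤ γ := le_trans (by linarith [ht.1]) hτγ
  obtain ⟨X, Y, hXY, -⟩ := hwp t (le_trans hτ0 ht.1) ht.2 hTt x
  obtain ⟨hXc, hYc, hXeq, hYeq⟩ := hXY
  have hX0 : X t = x := by
    have := hXeq t ⟨le_rfl, ht.2⟩
    simpa [intervalIntegral.integral_same] using this
  obtain ⟨hy₁c, hy₁d, -, -, hy₁f⟩ := hy₁
  obtain ⟨hy₂c, hy₂d, -, -, hy₂f⟩ := hy₂
  obtain ⟨M₁, hM₁⟩ := hy₁b
  obtain ⟨M₂, hM₂⟩ := hy₂b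
  have h1 := key_lemma hτ0 hηc hFc hFL hy₁c hy₁d hy₁f hM₁ heq₁ ht hXc hYc hXeq hYeq
    t ⟨le_rfl, ht.2⟩
  have h2 := key_lemma hτ0 hηc hFc hFL hy₂c hy₂d hy₂f hM₂ heq₂ ht hXc hYc hXeq hYeq
    t ⟨le_rfl, ht.2⟩
  rw [← hX0, ← h1, ← h2]
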